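/- (Stirling-type bound for binomial coefficients via Bernoulli KL divergence.) For all integers 0 < q < s, the binomial coefficient satisfies C(s,q) ≤ 2^s · √( s / (2π q (s−q)) ) · e^{1/(12s)} · exp( − s · KL( Be(q/s), Be(1/2) ) ), where KL(Be(u),Be(1/2)) = u log(2u) + (1−u) log(2(1−u)). Consequently, 2^s / C(s,q) ≥ √( 2π q (s−q)/s ) · e^{−1/(12s)} · exp( 2s (q/s − 1/2)² ). -/

import Mathlib

open MeasureTheory Filter

noncomputable section

namespace SSPT

/-- Index set of the free tree coordinates: a node at depth `l < L` with position `k < 2^l`.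
The coordinate at node `(l,k)` is the variable `Y_{ε0}` for the binary string `ε ≡ (l,k)`. -/
abbrev Node (L : ℕ) := (l : Fin L) × Fin (2 ^ (l : ℕ))

/-- Dyadic interval `I_{l,k} = (k 2^{-l}, (k+1) 2^{-l}]`. -/
def dyadic (l k : ℕ) : Set ℝ := Set.Ioc ((k : ℝ) / 2 ^ l) (((k : ℝ) + 1) / 2 ^ l)

/-- Number of sample points falling in a set. -/
def cnt {n : ℕ} (X : Fin n → ℝ) (s : Set ℝ) : ℕ := Nat.card {i : Fin n // X i ∈ s}

/-- `N_X(I_{l,k})`. -/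
def Ncnt {n : ℕ} (X : Fin n → ℝ) (l k : ℕ) : ℕ := cnt X (dyadic l k)

/-- `L = L(n)`: the largest integer with `2^L L² ≤ n`. -/
def Ln (n : ℕ) : ℕ := Nat.findGreatest (fun L => 2 ^ L * L ^ 2 ≤ n) n

/-- The tree variable `Y_{(l,k)}` (depth `1 ≤ l ≤ L`) built from the free coordinates
`y : Node L → ℝ`:  `Y_{ε0} = y(ε)` and `Y_{ε1} = 1 - y(ε)`.  Junk value `1/2` otherwise. -/
def Yt (L : ℕ) (y : Node L → ℝ) (l k : ℕ) : ℝ :=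
  if h : 0 < l ∧ l ≤ L ∧ k < 2 ^ l then
    have h1 : l - 1 < L := by omega
    have h2 : k / 2 < 2 ^ (l - 1) := by
      have hl : l - 1 + 1 = l := by omega
      have hk : k < 2 ^ (l - 1) * 2 := by rw [← pow_succ, hl]; exact h.2.2
      omega
    if k % 2 = 0 then y ⟨⟨l - 1, h1⟩, ⟨k / 2, h2⟩⟩ else 1 - y ⟨⟨l - 1, h1⟩, ⟨k / 2, h2⟩⟩
  else 1 / 2

/-- `P(I_ε) = ∏_{j=1}^{l} Y_{ε_1…ε_j}` for `ε ≡ (l,k)`. -/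
def Pmass (L : ℕ) (y : Node L → ℝ) : ℕ → ℕ → ℝ
  | 0, _ => 1
  | l + 1, k => Pmass L y l (k / 2) * Yt L y (l + 1) k

/-- The histogram density `f_Y = Σ_{|ε|=L} 2^L P(I_ε) 1_{I_ε}` associated with the tree. -/
def fY (L : ℕ) (y : Node L → ℝ) (x : ℝ) : ℝ :=
  ∑ k ∈ Finset.range (2 ^ L), (2 ^ L * Pmass L y L k) * (dyadic L k).indicator 1 x

/-- The Haar mother wavelet `ψ = -1 on (0,1/2], +1 on (1/2,1]`. -/
def haarMother (x : ℝ) : ℝ :=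
  (Set.Ioc (1 / 2 : ℝ) 1).indicator 1 x - (Set.Ioc (0 : ℝ) (1 / 2)).indicator 1 x

/-- `ψ_{lk}(x) = 2^{l/2} ψ(2^l x - k)`. -/
def psi (l k : ℕ) (x : ℝ) : ℝ := 2 ^ ((l : ℝ) / 2) * haarMother (2 ^ l * x - k)

/-- Haar coefficient `f_{lk} = ⟨f, ψ_{lk}⟩`. -/
def haarCoef (f : ℝ → ℝ) (l k : ℕ) : ℝ := ∫ x in Set.Ioc (0 : ℝ) 1, f x * psi l k x

/-- Hölder-type ball `H(α,R)`. -/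
def holder (α R : ℝ) (f : ℝ → ℝ) : Prop :=
  ∀ l k : ℕ, k < 2 ^ l → |haarCoef f l k| ≤ R * 2 ^ (-(l : ℝ) * (α + 1 / 2))

/-- The class `F(m0,m1)` of densities on `(0,1]` bounded below and above. -/
def densClass (m0 m1 : ℝ) (f : ℝ → ℝ) : Prop :=
  Measurable f ∧ (∫ x in Set.Ioc (0 : ℝ) 1, f x) = 1 ∧
    ∀ x ∈ Set.Ioc (0 : ℝ) 1, m0 ≤ f x ∧ f x ≤ m1

/-- The measure `P_f` with density `f` on `(0,1]`. -/
def Pf (f : ℝ → ℝ) : Measure ℝ :=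
  (volume.restrict (Set.Ioc (0 : ℝ) 1)).withDensity fun x => ENNReal.ofReal (f x)

/-- Law of an i.i.d. `n`-sample from `P_f`. -/
def Pn (n : ℕ) (f : ℝ → ℝ) : Measure (Fin n → ℝ) := Measure.pi fun _ => Pf f

/-- Beta function `B(a,b)`. -/
def betaFn (a b : ℝ) : ℝ := Real.Gamma a * Real.Gamma b / Real.Gamma (a + b)

/-- The `Beta(a,b)` distribution on `(0,1]`. -/
def betaMeasure (a b : ℝ) : Measure ℝ :=
  (volume.restrict (Set.Ioc (0 : ℝ) 1)).withDensity fun x =>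
    ENNReal.ofReal (x ^ (a - 1) * (1 - x) ^ (b - 1) / betaFn a b)

/-- Spike and slab mixture `(1-p) δ_{1/2} + p μ`. -/
def mix (p : ℝ) (μ : Measure ℝ) : Measure ℝ :=
  ENNReal.ofReal (1 - p) • Measure.dirac (1 / 2 : ℝ) + ENNReal.ofReal p • μ

/-- The spike-and-slab Pólya tree prior with slab `Beta(a,a)` and slab weights
`π j` at depth `j` (the coordinate at node `(l,k)` is `Y_{ε0}` with `|ε0| = l+1`). -/
def ssPrior (L : ℕ) (a : ℝ) (π : ℕ → ℝ) : Measure (Node L → ℝ) :=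
  Measure.pi fun p => mix (π ((p.1 : ℕ) + 1)) (betaMeasure a a)

/-- Likelihood of the sample under the histogram density `f_Y`. -/
def lik {n : ℕ} (L : ℕ) (X : Fin n → ℝ) (y : Node L → ℝ) : ℝ := ∏ i, fY L y (X i)

/-- The posterior distribution `Π(· | X)` of the tree coordinates, obtained from the
prior via Bayes' formula. -/
def post {n : ℕ} (L : ℕ) (a : ℝ) (π : ℕ → ℝ) (X : Fin n → ℝ) : Measure (Node L → ℝ) :=
  ((((ssPrior L a π).withDensity fun y => ENNReal.ofReal (lik L X y)) Set.univ)⁻¹) •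
    ((ssPrior L a π).withDensity fun y => ENNReal.ofReal (lik L X y))

/-- `T(ε,X) = 2^{N_X(I_ε)} B(N_X(I_{ε0})+a, N_X(I_{ε1})+a)/B(a,a)`. -/
def Tstat {n : ℕ} (a : ℝ) (X : Fin n → ℝ) (l k : ℕ) : ℝ :=
  2 ^ Ncnt X l k *
    betaFn ((Ncnt X (l + 1) (2 * k) : ℝ) + a) ((Ncnt X (l + 1) (2 * k + 1) : ℝ) + a) / betaFn a a

/-- Posterior slab weight `π̃_{ε0}`. -/
def piT {n : ℕ} (a : ℝ) (π : ℕ → ℝ) (X : Fin n → ℝ) (l k : ℕ) : ℝ :=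
  π (l + 1) * Tstat a X l k / ((1 - π (l + 1)) + π (l + 1) * Tstat a X l k)

/-- The (explicit, conjugate) marginal posterior distribution of `Y_{ε0}` for `ε ≡ (l,k)`:
`(1-π̃_{ε0}) δ_{1/2} + π̃_{ε0} Beta(N_X(I_{ε0})+a, N_X(I_{ε1})+a)`. -/
def margPost {n : ℕ} (a : ℝ) (π : ℕ → ℝ) (X : Fin n → ℝ) (l k : ℕ) : Measure ℝ :=
  mix (piT a π X l k)
    (betaMeasure ((Ncnt X (l + 1) (2 * k) : ℝ) + a) ((Ncnt X (l + 1) (2 * k + 1) : ℝ) + a))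

/-- The explicit (conjugate) posterior: product of the marginal posteriors. -/
def postExplicit {n : ℕ} (L : ℕ) (a : ℝ) (π : ℕ → ℝ) (X : Fin n → ℝ) :
    Measure (Node L → ℝ) :=
  Measure.pi fun p => margPost a π X (p.1 : ℕ) (p.2 : ℕ)

/-- `F_0(I_{l,k}) = ∫_{I_{l,k}} f_0`. -/
def F0 (f0 : ℝ → ℝ) (l k : ℕ) : ℝ := ∫ x in dyadic l k, f0 x

/-- `y_{ε0} = F_0(I_{ε0})/F_0(I_ε)` for `ε ≡ (l,k)`. -/
def yeps (f0 : ℝ → ℝ) (l k : ℕ) : ℝ := F0 f0 (l + 1) (2 * k) / F0 f0 l k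

/-- The event `B = B(M)`:  `|N_X(I^l_k) - n F_0(I^l_k)| ≤ M √((l+L)n/2^l)` for all `l ≤ L`, `k < 2^l`. -/
def eventB (n : ℕ) (M : ℝ) (f0 : ℝ → ℝ) : Set (Fin n → ℝ) :=
  {X | ∀ l ≤ Ln n, ∀ k < 2 ^ l,
    |(Ncnt X l k : ℝ) - n * F0 f0 l k| ≤
      M * Real.sqrt (((l : ℝ) + Ln n) * n / 2 ^ l)}

/-- The posterior mean `Ȳ_{ε0} = (1-π̃_{ε0})/2 + π̃_{ε0} (N_X(I_{ε0})+a)/(N_X(I_ε)+2a)`. -/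
def YbarNode {n : ℕ} (a : ℝ) (π : ℕ → ℝ) (X : Fin n → ℝ) (l k : ℕ) : ℝ :=
  (1 - piT a π X l k) * (1 / 2) +
    piT a π X l k * (((Ncnt X (l + 1) (2 * k) : ℝ) + a) / ((Ncnt X l k : ℝ) + 2 * a))

/-- Given a node function `Y : (l,k) ↦ Y_{ε0}`, the value of the tree variable at
depth `l ≥ 1` and position `k`: `Y_{ε0}` for even `k`, `1 - Y_{ε0}` for odd `k`. -/
def childT (Ynode : ℕ → ℕ → ℝ) (l k : ℕ) : ℝ :=
  if l = 0 then 1 / 2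
  else if k % 2 = 0 then Ynode (l - 1) (k / 2) else 1 - Ynode (l - 1) (k / 2)

/-- Product of the tree variables along the path to node `(l,k)`. -/
def pathProd (Ynode : ℕ → ℕ → ℝ) : ℕ → ℕ → ℝ
  | 0, _ => 1
  | l + 1, k => pathProd Ynode l (k / 2) * childT Ynode (l + 1) k

/-- Haar coefficient induced by a tree: `2^{l/2} p_ε (1 - 2 Y_{ε0})`. -/
def coefOfNodes (Ynode : ℕ → ℕ → ℝ) (l k : ℕ) : ℝ :=
  2 ^ ((l : ℝ) / 2) * pathProd Ynode l k * (1 - 2 * Ynode l k)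

/-- `p̄_ε`: mass of `I_ε` under the posterior mean. -/
def pbar {n : ℕ} (a : ℝ) (π : ℕ → ℝ) (X : Fin n → ℝ) (l k : ℕ) : ℝ :=
  pathProd (YbarNode a π X) l k

/-- The cut-off `𝓛 = 𝓛_n(α)` with `2^𝓛 = ⌊c₀ (n/log n)^{1/(1+2α)}⌋`. -/
def calL (c0 α : ℝ) (n : ℕ) : ℕ :=
  Nat.log 2 ⌊c0 * ((n : ℝ) / Real.log n) ^ (1 / (1 + 2 * α))⌋₊

/-- The minimax sup-norm rate `ε*_{n,α} = (log n/n)^{α/(2α+1)}`. -/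
def rateSup (α : ℝ) (n : ℕ) : ℝ := (Real.log n / n) ^ (α / (2 * α + 1))

/-- Supremum distance on `(0,1]`. -/
def supDist (f g : ℝ → ℝ) : ℝ := ⨆ x : Set.Ioc (0 : ℝ) 1, |f x.1 - g x.1|

/-- Multiscale norm `‖x‖_{M₀(w)} = sup_l max_{k<2^l} |x_{lk}|/w_l`. -/
def M0norm (w : ℕ → ℝ) (x : ℕ → ℕ → ℝ) : ℝ :=
  ⨆ l : ℕ, ⨆ k : Fin (2 ^ l), |x l (k : ℕ)| / w l

/-- Distance associated with the multiscale norm. -/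
def M0dist (w : ℕ → ℝ) (x y : ℕ → ℕ → ℝ) : ℝ := M0norm w fun l k => x l k - y l k

/-- Haar coefficients of the centering `C_n`:
empirical coefficients for `l ≤ L`, and `0` for `l > L`. -/
def CnArr {n : ℕ} (X : Fin n → ℝ) (l k : ℕ) : ℝ :=
  if l ≤ Ln n then (∑ i, psi l k (X i)) / n else 0

/-- Prior slab weights of Theorem 2: `π_l = e^{-κl}/Σ_{j=0}^{L} e^{-κj}`. -/
def priorW (κ : ℝ) (L : ℕ) (j : ℕ) : ℝ :=
  Real.exp (-κ * j) / ∑ i ∈ Finset.range (L + 1), Real.exp (-κ * i)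

/-- Unnormalized prior slab weights `π_l = e^{-κl}`. -/
def expW (κ : ℝ) (j : ℕ) : ℝ := Real.exp (-κ * j)

/-- Flat-initialisation slab weights: weight `1` (pure Beta) for nodes `ε` with `|ε| ≤ l₀`,
i.e. child depth `j = |ε|+1 ≤ l₀+1`, and `e^{-κ j}` beyond. -/
def flatW (κ : ℝ) (l0 : ℕ) (j : ℕ) : ℝ :=
  if j ≤ l0 + 1 then 1 else Real.exp (-κ * j)

/-- Median of a measure on `ℝ`. -/
def med (μ : Measure ℝ) : ℝ := sInf {t : ℝ | (1 / 2 : ENNReal) ≤ μ (Set.Iic t)}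

/-- The exponent `H(β,l)`: `β` for `l ≤ dL`, `α₀` for `l > dL`, `d = 1/α₀`. -/
def Hfun (α0 : ℝ) (L : ℕ) (β : ℝ) (l : ℕ) : ℝ := if (l : ℝ) ≤ (L : ℝ) / α0 then β else α0

/-- The norm `‖g‖_{β,L} = sup_l max_k 2^{l(H(β,l)+1/2)} |g_{lk}|`. -/
def normBL (α0 : ℝ) (L : ℕ) (β : ℝ) (g : ℕ → ℕ → ℝ) : ℝ :=
  ⨆ l : ℕ, ⨆ k : Fin (2 ^ l), 2 ^ ((l : ℝ) * (Hfun α0 L β l + 1 / 2)) * |g l (k : ℕ)|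

/-- Haar projection `K_j(f) = Σ_{l ≤ j-1} Σ_k ⟨f,ψ_{lk}⟩ ψ_{lk}`. -/
def Kproj (f : ℝ → ℝ) (j : ℕ) (t : ℝ) : ℝ :=
  ∑ l ∈ Finset.range j, ∑ k ∈ Finset.range (2 ^ l), haarCoef f l k * psi l k t

/-- Self-similar Hölder class `H_SS(α,M,ε)` (with base level `j₀`). -/
def selfSimilar (α Mc ε : ℝ) (j0 : ℕ) (f : ℝ → ℝ) : Prop :=
  holder α Mc f ∧ ∀ j : ℕ, j0 ≤ j → ε * 2 ^ (-(j : ℝ) * α) ≤ supDist (Kproj f j) f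

/-- Function reconstructed from an array of Haar coefficients. -/
def reconstruct (g : ℕ → ℕ → ℝ) (t : ℝ) : ℝ :=
  ∑' l : ℕ, ∑ k ∈ Finset.range (2 ^ l), g l k * psi l k t

/-- Bounded-Lipschitz distance between two measures, relative to a distance function `d`. -/
def BLdist {S : Type*} [MeasurableSpace S] (d : S → S → ℝ) (μ ν : Measure S) : ℝ :=
  ⨆ F : {F : S → ℝ // Measurable F ∧ ∃ c1 c2 : ℝ, 0 ≤ c1 ∧ 0 ≤ c2 ∧ c1 + c2 ≤ 1 ∧
      (∀ x, |F x| ≤ c1) ∧ ∀ x y, |F x - F y| ≤ c2 * d x y},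
    |(∫ x, F.1 x ∂μ) - ∫ x, F.1 x ∂ν|

/-- The recentering map `τ_{C_n} : f ↦ √n (f - C_n)` at the level of Haar coefficient arrays,
applied to a posterior draw of tree coordinates. -/
def tauMap {n : ℕ} (L : ℕ) (X : Fin n → ℝ) (y : Node L → ℝ) : ℕ → ℕ → ℝ :=
  fun l k => Real.sqrt n * (haarCoef (fY L y) l k - CnArr X l k)

/-- `∫ ψ_{lk} f₀`. -/
def psiMean (f0 : ℝ → ℝ) (l k : ℕ) : ℝ := ∫ t in Set.Ioc (0 : ℝ) 1, psi l k t * f0 t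

/-- Covariance of the `P_{f0}`-white bridge coordinates. -/
def covWB (f0 : ℝ → ℝ) (p q : ℕ × ℕ) : ℝ :=
  ∫ t in Set.Ioc (0 : ℝ) 1,
    (psi p.1 p.2 t - psiMean f0 p.1 p.2) * (psi q.1 q.2 t - psiMean f0 q.1 q.2) * f0 t

/-- `N` is a law of the `P_{f0}`-white bridge coordinate process: a probability measure
whose finite-dimensional linear marginals are centered Gaussian with the prescribed
covariance. -/
def isWhiteBridge (f0 : ℝ → ℝ) (N : Measure (ℕ → ℕ → ℝ)) : Prop :=
  IsProbabilityMeasure N ∧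
    ∀ c : (ℕ × ℕ) →₀ ℝ,
      N.map (fun x => ∑ p ∈ c.support, c p * x p.1 p.2) =
        ProbabilityTheory.gaussianReal 0
          (Real.toNNReal (∑ p ∈ c.support, ∑ q ∈ c.support, c p * c q * covWB f0 p q))

/-- The coordinate-wise marginal of the posterior at node `(l,k)`, `l < L`. -/
def postMarg {n : ℕ} (L : ℕ) (a : ℝ) (π : ℕ → ℝ) (X : Fin n → ℝ) (l k : ℕ) : Measure ℝ :=
  if h : l < L ∧ k < 2 ^ l then
    (post L a π X).map fun y => y ⟨⟨l, h.1⟩, ⟨k, h.2⟩⟩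
  else Measure.dirac (1 / 2 : ℝ)

/-- `ŷ_{ε0}`: the median of the marginal posterior of `Y_{ε0}` (`1/2` for `|ε| ≥ L`). -/
def yhatNode {n : ℕ} (L : ℕ) (a : ℝ) (π : ℕ → ℝ) (X : Fin n → ℝ) (l k : ℕ) : ℝ :=
  if l < L then med (postMarg L a π X l k) else 1 / 2

/-- The coefficients `f̂_{lk}` of the median-based pivot density estimator. -/
def fhat {n : ℕ} (L : ℕ) (a : ℝ) (π : ℕ → ℝ) (X : Fin n → ℝ) (l k : ℕ) : ℝ :=
  if l ≤ L then coefOfNodes (yhatNode L a π X) l k else 0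

/-- `ŷ_{ε0}` built from the explicit conjugate marginal posterior. -/
def yhatNodeE {n : ℕ} (L : ℕ) (a : ℝ) (π : ℕ → ℝ) (X : Fin n → ℝ) (l k : ℕ) : ℝ :=
  if l < L then med (margPost a π X l k) else 1 / 2

/-- Pivot coefficients built from the explicit conjugate marginal posterior medians. -/
def fhatE {n : ℕ} (L : ℕ) (a : ℝ) (π : ℕ → ℝ) (X : Fin n → ℝ) (l k : ℕ) : ℝ :=
  if l ≤ L then coefOfNodes (yhatNodeE L a π X) l k else 0

/-- `L̂`: the largest level carrying a nonzero coefficient of `f̂`. -/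
def Lhat (f : ℕ → ℕ → ℝ) : ℕ := sSup {l : ℕ | ∃ k < 2 ^ l, f l k ≠ 0}

/-- `α̂ = (1/2)[(1/L̂) log₂(n/log n) - 1]`. -/
def alphaHat (n Lh : ℕ) : ℝ :=
  (1 / 2) * ((1 / (Lh : ℝ)) * Real.logb 2 ((n : ℝ) / Real.log n) - 1)

/-- The quantile radius `R_n`: generalized `(1-γ)`-quantile of `√n ‖f - C_n‖_{M₀(w)}`
under the posterior. -/
def Rquant {n : ℕ} (L : ℕ) (a : ℝ) (π : ℕ → ℝ) (X : Fin n → ℝ) (w : ℕ → ℝ) (γ : ℝ) : ℝ :=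
  sInf {r : ℝ | ENNReal.ofReal (1 - γ) ≤
    post L a π X
      {y | Real.sqrt n *
        M0norm w (fun l k => haarCoef (fY L y) l k - CnArr X l k) ≤ r}}

/-- `l₀(n) = log n / log log n`. -/
def l0cred (n : ℕ) : ℕ := ⌊Real.log n / Real.log (Real.log n)⌋₊

/-- `w_l = √l log l`. -/
def wcred (l : ℕ) : ℝ := Real.sqrt l * Real.log l

/-- The credible band `C`, as a set of Haar-coefficient arrays. -/
def credSet {n : ℕ} (a : ℝ) (π : ℕ → ℝ) (X : Fin n → ℝ) (α0 γ un : ℝ) :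
    Set (ℕ → ℕ → ℝ) :=
  {g | M0norm wcred (fun l k => g l k - CnArr X l k) ≤
        Rquant (Ln n) a π X wcred γ / Real.sqrt n ∧
      normBL α0 (Ln n) (alphaHat n (Lhat (fhat (Ln n) a π X))) g ≤ un}

open Real Stirling Topology Nat

lemma sspt_diff_le (n : ℕ) :
    Real.log (stirlingSeq (n + 1)) - Real.log (stirlingSeq (n + 2)) ≤
      1 / 12 * (1 / ((n:ℝ) + 1) - 1 / ((n:ℝ) + 2)) := by
  have hx : (0:ℝ) ≤ (1 / (2 * ((n:ℝ) + 1) + 1)) ^ 2 := sq_nonneg _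
  have hn0 : (0:ℝ) ≤ (n:ℝ) := Nat.cast_nonneg n
  have hxlt : (1 / (2 * ((n:ℝ) + 1) + 1)) ^ 2 < 1 := by
    rw [one_div, inv_pow]
    exact inv_lt_one_of_one_lt₀ (one_lt_pow₀ (by nlinarith) two_ne_zero)
  have g : HasSum (fun k : ℕ => (1/3 : ℝ) * ((1 / (2 * ((n:ℝ) + 1) + 1)) ^ 2) ^ (k + 1))
      (1/3 * ((1 / (2 * ((n:ℝ) + 1) + 1)) ^ 2 / (1 - (1 / (2 * ((n:ℝ) + 1) + 1)) ^ 2))) := by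
    have := (hasSum_geometric_of_lt_one hx hxlt).mul_left ((1 / (2 * ((n:ℝ) + 1) + 1)) ^ 2)
    simp_rw [← _root_.pow_succ'] at this
    rw [div_eq_mul_inv]
    exact this.mul_left (1/3)
  have hle : Real.log (stirlingSeq (n + 1)) - Real.log (stirlingSeq (n + 2)) ≤
      1/3 * ((1 / (2 * ((n:ℝ) + 1) + 1)) ^ 2 / (1 - (1 / (2 * ((n:ℝ) + 1) + 1)) ^ 2)) := by
    refine hasSum_le (fun k => ?_) (Stirling.log_stirlingSeq_diff_hasSum n) g
    have hk : (3:ℝ) ≤ 2 * ((k:ℝ) + 1) + 1 := by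
      have : (0:ℝ) ≤ (k:ℝ) := Nat.cast_nonneg k; linarith
    have h1 : (1:ℝ) / (2 * ((k:ℝ)+1) + 1) ≤ 1/3 := by
      apply one_div_le_one_div_of_le <;> linarith
    push_cast
    exact mul_le_mul_of_nonneg_right h1 (pow_nonneg hx _)
  refine hle.trans (le_of_eq ?_)
  have h2 : (2 * ((n:ℝ) + 1) + 1) ≠ 0 := by positivity
  have h3 : (1:ℝ) - (1 / (2 * ((n:ℝ) + 1) + 1)) ^ 2 ≠ 0 := by
    nlinarith [hxlt]
  field_simp
  ring_nf
  have h4 : ((24:ℝ) + ↑n*36 + ↑n^2*12) ≠ 0 := by positivity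
  field_simp
  ring

lemma sspt_log_le (n : ℕ) :
    Real.log (stirlingSeq (n + 1)) ≤ Real.log (Real.sqrt Real.pi) + 1 / (12 * ((n:ℝ) + 1)) := by
  have key : ∀ N : ℕ, Real.log (stirlingSeq (n + 1)) - 1 / (12 * ((n:ℝ) + 1))
      ≤ Real.log (stirlingSeq (n + 1 + N)) := by
    intro N
    have key2 : ∀ N : ℕ, Real.log (stirlingSeq (n + 1)) -
        1/12 * (1/((n:ℝ)+1) - 1/((n:ℝ)+1+N)) ≤ Real.log (stirlingSeq (n + 1 + N)) := by
      intro N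
      induction N with
      | zero => simp
      | succ N ih =>
        have h := sspt_diff_le (n + N)
        have e1 : n + 1 + (N + 1) = n + N + 2 := by omega
        have e2 : n + 1 + N = n + N + 1 := by omega
        rw [e1]
        rw [e2] at ih
        have c1 : (1:ℝ)/((n:ℝ)+1+N) = 1/(↑(n+N)+1) := by push_cast; ring_nf
        have c2 : (1:ℝ)/((n:ℝ)+1+(N+1):ℝ) = 1/(↑(n+N)+2) := by push_cast; ring_nf
        rw [c1] at ih
        push_cast
        push_cast at ih h
        ring_nf at ih h ⊢
        linarith
    have h := key2 N
    have : (0:ℝ) < (n:ℝ) + 1 + N := by positivity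
    have h2 : (0:ℝ) ≤ 1/((n:ℝ)+1+N) := by positivity
    have h3 : 1/12 * (1/((n:ℝ)+1) - 1/((n:ℝ)+1+N)) ≤ 1 / (12 * ((n:ℝ)+1)) := by
      rw [one_div (12 * ((n:ℝ)+1))]
      have : (12 * ((n:ℝ)+1))⁻¹ = 1/12 * (1/((n:ℝ)+1)) := by
        field_simp
      rw [this]
      nlinarith
    linarith
  have ht : Tendsto (fun N : ℕ => Real.log (stirlingSeq (n + 1 + N))) atTop
      (𝓝 (Real.log (Real.sqrt Real.pi))) := by
    have hcomp : Tendsto (fun N : ℕ => stirlingSeq (n + 1 + N)) atTop (𝓝 (Real.sqrt Real.pi)) := by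
      refine (Stirling.tendsto_stirlingSeq_sqrt_pi.comp (tendsto_add_atTop_nat (n+1))).congr ?_
      intro N; simp [Nat.add_comm]
    exact ((Real.continuousAt_log (Real.sqrt_pos.mpr Real.pi_pos).ne').tendsto.comp hcomp)
  have := ge_of_tendsto ht (Filter.Eventually.of_forall key)
  linarith

lemma sspt_st_upper (n : ℕ) :
    stirlingSeq (n + 1) ≤ Real.sqrt Real.pi * Real.exp (1 / (12 * ((n:ℝ) + 1))) := by
  have h := sspt_log_le n
  have hpos := Stirling.stirlingSeq'_pos n
  calc stirlingSeq (n+1) = Real.exp (Real.log (stirlingSeq (n+1))) := (Real.exp_log hpos).symm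
    _ ≤ Real.exp (Real.log (Real.sqrt Real.pi) + 1 / (12 * ((n:ℝ) + 1))) := Real.exp_le_exp.mpr h
    _ = Real.sqrt Real.pi * Real.exp (1 / (12 * ((n:ℝ) + 1))) := by
        rw [Real.exp_add, Real.exp_log (Real.sqrt_pos.mpr Real.pi_pos)]

lemma sspt_st_lower (n : ℕ) : Real.sqrt Real.pi ≤ stirlingSeq (n + 1) := by
  have ht : Tendsto (stirlingSeq ∘ Nat.succ) atTop (𝓝 (Real.sqrt Real.pi)) := by
    refine (Stirling.tendsto_stirlingSeq_sqrt_pi.comp (tendsto_add_atTop_nat 1)).congr ?_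
    intro N; simp [Nat.add_comm]
  exact Stirling.stirlingSeq'_antitone.le_of_tendsto ht n

lemma sspt_fac_ge (n : ℕ) (hn : 0 < n) :
    Real.sqrt (2 * Real.pi * n) * ((n:ℝ) / Real.exp 1) ^ n ≤ (n ! : ℝ) := by
  obtain ⟨m, rfl⟩ : ∃ m, n = m + 1 := ⟨n - 1, by omega⟩
  have h := sspt_st_lower m
  rw [stirlingSeq, le_div_iff₀ (by positivity)] at h
  push_cast at h ⊢
  calc Real.sqrt (2 * Real.pi * ((m:ℝ)+1)) * (((m:ℝ)+1) / Real.exp 1) ^ (m+1)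
      = Real.sqrt Real.pi * (Real.sqrt (2 * ((m:ℝ)+1)) * (((m:ℝ)+1) / Real.exp 1) ^ (m+1)) := by
        rw [show (2 * Real.pi * ((m:ℝ)+1)) = Real.pi * (2 * ((m:ℝ)+1)) by ring,
          Real.sqrt_mul Real.pi_pos.le, mul_assoc]
    _ ≤ (((m+1) ! : ℕ) : ℝ) := h

lemma sspt_fac_le (n : ℕ) (hn : 0 < n) :
    ((n ! : ℕ) : ℝ) ≤ Real.sqrt (2 * Real.pi * n) * ((n:ℝ) / Real.exp 1) ^ n *
      Real.exp (1 / (12 * (n:ℝ))) := by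
  obtain ⟨m, rfl⟩ : ∃ m, n = m + 1 := ⟨n - 1, by omega⟩
  have h := sspt_st_upper m
  rw [stirlingSeq, div_le_iff₀ (by positivity)] at h
  push_cast at h ⊢
  calc ((m+1)! : ℝ) ≤ Real.sqrt Real.pi * Real.exp (1 / (12 * ((m:ℝ) + 1))) *
        (Real.sqrt (2 * ((m:ℝ)+1)) * (((m:ℝ)+1) / Real.exp 1) ^ (m+1)) := h
    _ = Real.sqrt (2 * Real.pi * ((m:ℝ)+1)) * (((m:ℝ)+1) / Real.exp 1) ^ (m+1) *
        Real.exp (1 / (12 * ((m:ℝ)+1))) := by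
        rw [show (2 * Real.pi * ((m:ℝ)+1)) = Real.pi * (2 * ((m:ℝ)+1)) by ring,
          Real.sqrt_mul Real.pi_pos.le]
        ring

lemma sspt_pinsker_aux : ∀ x ∈ Set.Ico (0:ℝ) 1,
    x ^ 2 ≤ (1 + x) * Real.log (1 + x) + (1 - x) * Real.log (1 - x) := by
  set g : ℝ → ℝ := fun x => (1 + x) * Real.log (1 + x) + (1 - x) * Real.log (1 - x) - x ^ 2
    with hg
  have hderiv : ∀ x ∈ Set.Ioo (0:ℝ) 1, HasDerivAt g
      (Real.log (1 + x) - Real.log (1 - x) - 2 * x) x := by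
    intro x hx
    obtain ⟨hx0, hx1⟩ := hx
    have h1p : (0:ℝ) < 1 + x := by linarith
    have h1m : (0:ℝ) < 1 - x := by linarith
    have hA : HasDerivAt (fun y : ℝ => 1 + y) 1 x := (hasDerivAt_id x).const_add 1
    have hB : HasDerivAt (fun y : ℝ => 1 - y) (-1) x := by
      simpa using (hasDerivAt_id x).const_sub 1
    have hlogA : HasDerivAt (fun y : ℝ => Real.log (1 + y)) (1 / (1 + x)) x := by
      simpa using hA.log h1p.ne'
    have hlogB : HasDerivAt (fun y : ℝ => Real.log (1 - y)) (-1 / (1 - x)) x := by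
      simpa using hB.log h1m.ne'
    have h1 := hA.mul hlogA
    have h2 := hB.mul hlogB
    have h3 : HasDerivAt (fun y : ℝ => y ^ 2) (2 * x) x := by
      simpa using hasDerivAt_pow 2 x
    have := (h1.add h2).sub h3
    refine this.congr_deriv ?_
    field_simp
    ring
  have hmono : MonotoneOn g (Set.Ico (0:ℝ) 1) := by
    have hconv : Convex ℝ (Set.Ico (0:ℝ) 1) := convex_Ico 0 1
    have hcont : ContinuousOn g (Set.Ico (0:ℝ) 1) := by
      apply ContinuousOn.sub
      apply ContinuousOn.add
      · exact (continuousOn_const.add continuousOn_id).mul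
          ((continuousOn_const.add continuousOn_id).log
            (fun x hx => by show (1:ℝ) + x ≠ 0; have := hx.1; intro h; linarith))
      · exact (continuousOn_const.sub continuousOn_id).mul
          ((continuousOn_const.sub continuousOn_id).log
            (fun x hx => by show (1:ℝ) - x ≠ 0; have := hx.2; intro h; linarith))
      · exact (continuous_pow 2).continuousOn
    rw [show Set.Ico (0:ℝ) 1 = Set.Ico (0:ℝ) 1 from rfl]
    have hint : interior (Set.Ico (0:ℝ) 1) = Set.Ioo 0 1 := interior_Ico
    apply monotoneOn_of_deriv_nonneg hconv hcont
    · rw [hint]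
      intro x hx
      exact (hderiv x hx).differentiableAt.differentiableWithinAt
    · rw [hint]
      intro x hx
      rw [(hderiv x hx).deriv]
      obtain ⟨hx0, hx1⟩ := hx
      have habs : |x| < 1 := by rw [abs_of_pos hx0]; exact hx1
      have hs := Real.hasSum_log_sub_log_of_abs_lt_one habs
      have h2x : 2 * x ≤ Real.log (1 + x) - Real.log (1 - x) := by
        have h0 := le_hasSum hs 0 (fun i _ => by positivity)
        simpa using h0
      linarith
  intro x hx
  have h0 : g 0 ≤ g x := hmono (by constructor <;> norm_num) hx hx.1
  have hg0 : g 0 = 0 := by simp [hg]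
  simp only [hg] at h0 hg0
  linarith

lemma sspt_pinsker (u : ℝ) (h0 : 0 < u) (h1 : u < 1) :
    2 * (u - 1/2) ^ 2 ≤ u * Real.log (2 * u) + (1 - u) * Real.log (2 * (1 - u)) := by
  have key : ∀ x : ℝ, -1 < x → x < 1 →
      x ^ 2 ≤ (1 + x) * Real.log (1 + x) + (1 - x) * Real.log (1 - x) := by
    intro x hm hp
    rcases le_or_gt 0 x with hx | hx
    · exact sspt_pinsker_aux x ⟨hx, hp⟩
    · have := sspt_pinsker_aux (-x) ⟨by linarith, by linarith⟩
      have e1 : 1 + -x = 1 - x := by ring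
      have e2 : 1 - -x = 1 + x := by ring
      rw [e1, e2] at this
      nlinarith [this]
  have h := key (2 * u - 1) (by linarith) (by linarith)
  have e1 : 1 + (2 * u - 1) = 2 * u := by ring
  have e2 : 1 - (2 * u - 1) = 2 * (1 - u) := by ring
  rw [e1, e2] at h
  nlinarith [h]


set_option maxHeartbeats 1000000 in
/-- Stirling-type bound for binomial coefficients via the Bernoulli
Kullback-Leibler divergence, and the resulting lower bound on `2^s / C(s,q)`. -/
theorem statement19 (s q : ℕ) (h0 : 0 < q) (hqs : q < s) :
    (Nat.choose s q : ℝ) ≤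
        2 ^ s * Real.sqrt ((s : ℝ) / (2 * Real.pi * q * ((s : ℝ) - q))) *
          Real.exp (1 / (12 * s)) *
          Real.exp (-(s : ℝ) *
            (((q : ℝ) / s) * Real.log (2 * ((q : ℝ) / s)) +
              (1 - (q : ℝ) / s) * Real.log (2 * (1 - (q : ℝ) / s)))) ∧
    Real.sqrt (2 * Real.pi * q * ((s : ℝ) - q) / s) * Real.exp (-(1 / (12 * s))) *
        Real.exp (2 * s * ((q : ℝ) / s - 1 / 2) ^ 2) ≤
      2 ^ s / (Nat.choose s q : ℝ) := by

  obtain ⟨p, rfl⟩ : ∃ p, s = q + p := ⟨s - q, by omega⟩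
  have hp : 0 < p := by omega
  have hcast : ((q + p : ℕ) : ℝ) - (q : ℝ) = (p : ℝ) := by push_cast; ring
  rw [hcast]
  have hS : (0:ℝ) < ((q + p : ℕ) : ℝ) := by positivity
  have hQ : (0:ℝ) < (q : ℝ) := by exact_mod_cast h0
  have hP : (0:ℝ) < (p : ℝ) := by exact_mod_cast hp
  have hSQP : ((q + p : ℕ) : ℝ) = (q : ℝ) + (p : ℝ) := by push_cast; ring
  set S : ℝ := ((q + p : ℕ) : ℝ) with hSdef
  set Q : ℝ := (q : ℝ) with hQdef
  set P : ℝ := (p : ℝ) with hPdef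
  -- the KL expression
  set KL : ℝ := Q / S * Real.log (2 * (Q / S)) + (1 - Q / S) * Real.log (2 * (1 - Q / S))
    with hKLdef
  have h1mu : 1 - Q / S = P / S := by
    rw [hSQP]; field_simp; ring
  have hlog2Q : Real.log (2 * (Q / S)) = Real.log 2 + Real.log Q - Real.log S := by
    rw [Real.log_mul two_ne_zero (by positivity), Real.log_div hQ.ne' hS.ne']; ring
  have hlog2P : Real.log (2 * (P / S)) = Real.log 2 + Real.log P - Real.log S := by
    rw [Real.log_mul two_ne_zero (by positivity), Real.log_div hP.ne' hS.ne']; ring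
  have hlin : -(S) * KL = (q + p : ℕ) * Real.log S -
      ((q + p : ℕ) * Real.log 2 + q * Real.log Q + p * Real.log P) := by
    rw [hKLdef, h1mu, hlog2Q, hlog2P, hSQP]
    push_cast
    simp only [← hQdef, ← hPdef]
    have hQP : Q + P ≠ 0 := by rw [hQdef, hPdef]; positivity
    field_simp
    ring
  have hexpval : Real.exp (-(S) * KL) = S ^ (q + p) / (2 ^ (q + p) * Q ^ q * P ^ p) := by
    rw [hlin]
    simp only [← Real.log_pow]
    rw [Real.exp_sub, Real.exp_add, Real.exp_add, Real.exp_log (by positivity),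
      Real.exp_log (by positivity), Real.exp_log (by positivity),
      Real.exp_log (by positivity)]
  -- factorial bounds
  have hub := sspt_fac_le (q + p) (by omega)
  have hlb1 := sspt_fac_ge q h0
  have hlb2 := sspt_fac_ge p hp
  have hchoose : ((q + p).choose q : ℝ) = ((q + p)! : ℝ) / ((q ! : ℝ) * (p ! : ℝ)) := by
    rw [Nat.cast_choose ℝ (by omega : q ≤ q + p), show q + p - q = p from by omega]
  set B : ℝ := Real.sqrt (2 * Real.pi * Q) * (Q / Real.exp 1) ^ q *
      (Real.sqrt (2 * Real.pi * P) * (P / Real.exp 1) ^ p) with hBdef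
  have hBpos : 0 < B := by rw [hBdef]; positivity
  set A : ℝ := Real.sqrt (2 * Real.pi * S) * (S / Real.exp 1) ^ (q + p) *
      Real.exp (1 / (12 * S)) with hAdef
  have h1 : ((q + p).choose q : ℝ) ≤ A / B := by
    rw [hchoose]
    apply div_le_div₀ (by rw [hAdef]; positivity) hub hBpos
    exact mul_le_mul hlb1 hlb2 (by positivity) (Nat.cast_nonneg _)
  have hsq : Real.sqrt (S / (2 * Real.pi * Q * P)) =
      Real.sqrt (2 * Real.pi * S) / (Real.sqrt (2 * Real.pi * Q) * Real.sqrt (2 * Real.pi * P)) := by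
    rw [← Real.sqrt_mul (by positivity), ← Real.sqrt_div (by positivity)]
    congr 1
    field_simp
  have heq : A / B = 2 ^ (q + p) * Real.sqrt (S / (2 * Real.pi * Q * P)) *
      Real.exp (1 / (12 * S)) * Real.exp (-(S) * KL) := by
    rw [hexpval, hsq, hAdef, hBdef]
    have hne1 : Real.sqrt (2 * Real.pi * Q) ≠ 0 := by positivity
    have hne2 : Real.sqrt (2 * Real.pi * P) ≠ 0 := by positivity
    have hne3 : Real.exp 1 ≠ 0 := Real.exp_ne_zero 1
    have hne4 : Q ≠ 0 := hQ.ne'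
    have hne5 : P ≠ 0 := hP.ne'
    have hne6 : S ≠ 0 := hS.ne'
    field_simp
    rw [div_pow, div_pow, div_pow, pow_add]
    ring
  have part1 : ((q + p).choose q : ℝ) ≤ 2 ^ (q + p) *
      Real.sqrt (S / (2 * Real.pi * Q * P)) * Real.exp (1 / (12 * S)) *
      Real.exp (-(S) * KL) := heq ▸ h1
  constructor
  · exact part1
  · -- part 2
    have hCpos : (0:ℝ) < ((q + p).choose q : ℝ) := by
      exact_mod_cast Nat.choose_pos (by omega : q ≤ q + p)
    set RHS1 : ℝ := 2 ^ (q + p) * Real.sqrt (S / (2 * Real.pi * Q * P)) *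
      Real.exp (1 / (12 * S)) * Real.exp (-(S) * KL) with hR1def
    have hR1pos : 0 < RHS1 := by rw [hR1def]; positivity
    have h2 : (2:ℝ) ^ (q + p) / RHS1 ≤ 2 ^ (q + p) / ((q + p).choose q : ℝ) := by
      gcongr
    refine le_trans ?_ h2
    have hY : (0:ℝ) < 2 * Real.pi * Q * P := by positivity
    have h7 : Real.sqrt (2 * Real.pi * Q * P / S) * Real.sqrt (S / (2 * Real.pi * Q * P)) = 1 := by
      rw [← Real.sqrt_mul (by positivity),
        show 2 * Real.pi * Q * P / S * (S / (2 * Real.pi * Q * P)) = 1 by field_simp]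
      exact Real.sqrt_one
    have hAexpand : (2:ℝ) ^ (q + p) / RHS1 =
        Real.sqrt (2 * Real.pi * Q * P / S) * Real.exp (-(1 / (12 * S))) *
          Real.exp (S * KL) := by
      rw [div_eq_iff hR1pos.ne', hR1def]
      refine Eq.symm ?_
      have h5 : Real.exp (-(1 / (12 * S))) * Real.exp (1 / (12 * S)) = 1 := by
        rw [← Real.exp_add]; norm_num
      have h6 : Real.exp (S * KL) * Real.exp (-(S) * KL) = 1 := by
        rw [← Real.exp_add, show S * KL + -(S) * KL = 0 by ring]; exact Real.exp_zero
      calc Real.sqrt (2 * Real.pi * Q * P / S) * Real.exp (-(1 / (12 * S))) *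
            Real.exp (S * KL) * (2 ^ (q + p) * Real.sqrt (S / (2 * Real.pi * Q * P)) *
            Real.exp (1 / (12 * S)) * Real.exp (-(S) * KL))
          = 2 ^ (q + p) * ((Real.sqrt (2 * Real.pi * Q * P / S) *
              Real.sqrt (S / (2 * Real.pi * Q * P))) *
              ((Real.exp (-(1 / (12 * S))) * Real.exp (1 / (12 * S))) *
              (Real.exp (S * KL) * Real.exp (-(S) * KL)))) := by ring
        _ = 2 ^ (q + p) := by rw [h5, h6, h7]; ring
    rw [hAexpand]
    have hu0 : 0 < Q / S := by positivity
    have hu1 : Q / S < 1 := by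
      rw [div_lt_one hS, hSQP]; linarith
    have hKLge : 2 * S * (Q / S - 1 / 2) ^ 2 ≤ S * KL := by
      have hpk := sspt_pinsker (Q / S) hu0 hu1
      rw [h1mu] at hpk
      rw [hKLdef, h1mu]
      calc 2 * S * (Q / S - 1 / 2) ^ 2 = S * (2 * (Q / S - 1 / 2) ^ 2) := by ring
        _ ≤ S * (Q / S * Real.log (2 * (Q / S)) + P / S * Real.log (2 * (P / S))) :=
            mul_le_mul_of_nonneg_left hpk hS.le
    exact mul_le_mul_of_nonneg_left (Real.exp_le_exp.mpr hKLge) (by positivity)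


end SSPT

end
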